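/- Fix a ∈ ℝ and γ > 0, and define the deterministic sequences ã_{r+1} = ã_r + γ̃_r(a − ã_r)/(γ + γ̃_r) and γ̃_{r+1}² = γ̃_r(γ + (a − ã_r)²/(γ + γ̃_r)) from arbitrary ã₀ ∈ ℝ, γ̃₀ > 0. Then (ã_r, γ̃_r) → (a, γ) as r → ∞, with |ã_{r+1} − a| ≤ q|ã_r − a| where q = max{1/2, γ/(γ + γ̃₀)} < 1, and |γ̃_{r+1}² − γ²| ≤ q|γ̃_r² − γ²| + (a − ã_r)². -/

import Mathlib

open Filter Real

/-- The deterministic asymptotic myriad iteration converges linearly: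
`(ã_r, γ̃_r) → (a, γ)` with `|ã_{r+1} − a| ≤ q|ã_r − a|`,
`q = max{1/2, γ/(γ + γ̃₀)}`, and
`|γ̃_{r+1}² − γ²| ≤ q|γ̃_r² − γ²| + (a − ã_r)²`. -/
theorem asymptotic_myriad_convergence (a γ : ℝ) (hγ : 0 < γ)
    (ta tg : ℕ → ℝ) (htg0 : 0 < tg 0) (htgpos : ∀ r, 0 < tg r)
    (ha : ∀ r, ta (r + 1) = ta r + tg r * (a - ta r) / (γ + tg r))
    (hg : ∀ r, (tg (r + 1)) ^ 2 = tg r * (γ + (a - ta r) ^ 2 / (γ + tg r))) :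
    Tendsto (fun r => (ta r, tg r)) atTop (nhds (a, γ)) ∧
    (∀ r, |ta (r + 1) - a| ≤ max (1 / 2) (γ / (γ + tg 0)) * |ta r - a|) ∧
    max (1 / 2) (γ / (γ + tg 0)) < 1 ∧
    (∀ r, |(tg (r + 1)) ^ 2 - γ ^ 2| ≤
      max (1 / 2) (γ / (γ + tg 0)) * |(tg r) ^ 2 - γ ^ 2| + (a - ta r) ^ 2) := by
  set q : ℝ := max (1 / 2) (γ / (γ + tg 0)) with hqdef
  have hq0 : (1:ℝ)/2 ≤ q := le_max_left _ _
  have hqpos : 0 < q := lt_of_lt_of_le (by norm_num) hq0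
  have hq1 : q < 1 := by
    apply max_lt (by norm_num)
    rw [div_lt_one (by positivity)]
    linarith
  have hden : ∀ r, 0 < γ + tg r := fun r => by have := htgpos r; linarith
  -- lower bound on tg
  set m : ℝ := min (tg 0) γ with hmdef
  have hm0 : 0 < m := lt_min htg0 hγ
  have hmin : ∀ r, m ≤ tg r := by
    intro r
    induction r with
    | zero => exact min_le_left _ _
    | succ r ih =>
      have h1 : m ^ 2 ≤ tg (r + 1) ^ 2 := by
        rw [hg r]
        have h2 : m * m ≤ tg r * γ :=
          mul_le_mul ih (min_le_right _ _) hm0.le (htgpos r).le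
        have h3 : 0 ≤ (a - ta r) ^ 2 / (γ + tg r) := div_nonneg (sq_nonneg _) (hden r).le
        nlinarith [htgpos r]
      calc m = Real.sqrt (m ^ 2) := (Real.sqrt_sq hm0.le).symm
        _ ≤ Real.sqrt (tg (r + 1) ^ 2) := Real.sqrt_le_sqrt h1
        _ = tg (r + 1) := Real.sqrt_sq (htgpos _).le
  have hqr : ∀ r, γ / (γ + tg r) ≤ q := by
    intro r
    rcases le_total (tg 0) γ with h | h
    · have hm : m = tg 0 := min_eq_left h
      have : γ / (γ + tg r) ≤ γ / (γ + tg 0) := by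
        apply div_le_div_of_nonneg_left hγ.le (hden 0) _
        have := hmin r; rw [hm] at this; linarith
      exact this.trans (le_max_right _ _)
    · have hm : m = γ := min_eq_right h
      have : γ / (γ + tg r) ≤ γ / (γ + γ) := by
        apply div_le_div_of_nonneg_left hγ.le (by linarith) _
        have := hmin r; rw [hm] at this; linarith
      refine le_trans this (le_trans (le_of_eq ?_) hq0)
      rw [← two_mul, mul_comm, mul_comm γ 2]
      rw [div_eq_div_iff (by linarith) (by norm_num)]
      ring
  -- contraction for ta
  have hkey : ∀ r, ta (r + 1) - a = γ / (γ + tg r) * (ta r - a) := by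
    intro r
    rw [ha r]
    field_simp [(hden r).ne']
    ring
  have hA : ∀ r, |ta (r + 1) - a| ≤ q * |ta r - a| := by
    intro r
    rw [hkey r, abs_mul]
    apply mul_le_mul_of_nonneg_right _ (abs_nonneg _)
    rw [abs_of_nonneg (div_nonneg hγ.le (hden r).le)]
    exact hqr r
  -- contraction for tg^2
  have hB : ∀ r, |(tg (r + 1)) ^ 2 - γ ^ 2| ≤ q * |(tg r) ^ 2 - γ ^ 2| + (a - ta r) ^ 2 := by
    intro r
    have hd := hden r
    have hpos := htgpos r
    have hstep : (tg (r + 1)) ^ 2 - γ ^ 2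
        = γ / (γ + tg r) * ((tg r) ^ 2 - γ ^ 2) + tg r / (γ + tg r) * (a - ta r) ^ 2 := by
      rw [hg r]
      field_simp
      ring
    rw [hstep]
    calc |γ / (γ + tg r) * ((tg r) ^ 2 - γ ^ 2) + tg r / (γ + tg r) * (a - ta r) ^ 2|
        ≤ |γ / (γ + tg r) * ((tg r) ^ 2 - γ ^ 2)| + |tg r / (γ + tg r) * (a - ta r) ^ 2| :=
          abs_add_le _ _
      _ ≤ q * |(tg r) ^ 2 - γ ^ 2| + 1 * (a - ta r) ^ 2 := by
          apply add_le_add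
          · rw [abs_mul, abs_of_nonneg (by positivity : (0:ℝ) ≤ γ / (γ + tg r))]
            exact mul_le_mul_of_nonneg_right (hqr r) (abs_nonneg _)
          · rw [abs_mul, abs_of_nonneg (by positivity : (0:ℝ) ≤ tg r / (γ + tg r)),
              abs_of_nonneg (by positivity : (0:ℝ) ≤ (a - ta r) ^ 2)]
            apply mul_le_mul_of_nonneg_right _ (by positivity)
            rw [div_le_one hd]; linarith
      _ = q * |(tg r) ^ 2 - γ ^ 2| + (a - ta r) ^ 2 := by ring
  -- geometric bounds
  have hAgeo : ∀ r, |ta r - a| ≤ q ^ r * |ta 0 - a| := by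
    intro r
    induction r with
    | zero => simp
    | succ r ih =>
      calc |ta (r + 1) - a| ≤ q * |ta r - a| := hA r
        _ ≤ q * (q ^ r * |ta 0 - a|) := mul_le_mul_of_nonneg_left ih hqpos.le
        _ = q ^ (r + 1) * |ta 0 - a| := by ring
  set C : ℝ := (a - ta 0) ^ 2 with hCdef
  have hC0 : 0 ≤ C := sq_nonneg _
  have hsq : ∀ r, (a - ta r) ^ 2 ≤ q ^ r * C := by
    intro r
    have h1 : |a - ta r| ≤ q ^ r * |a - ta 0| := by
      rw [abs_sub_comm a (ta r), abs_sub_comm a (ta 0)]; exact hAgeo r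
    have h2 : (a - ta r) ^ 2 ≤ (q ^ r * |a - ta 0|) ^ 2 := by
      rw [← sq_abs (a - ta r)]
      exact pow_le_pow_left₀ (abs_nonneg _) h1 2
    have hqle : q ^ r ≤ 1 := pow_le_one₀ hqpos.le hq1.le
    calc (a - ta r) ^ 2 ≤ (q ^ r) ^ 2 * |a - ta 0| ^ 2 := by rw [mul_pow] at h2; exact h2
      _ ≤ q ^ r * |a - ta 0| ^ 2 := by
          apply mul_le_mul_of_nonneg_right _ (by positivity)
          calc (q ^ r) ^ 2 = q ^ r * q ^ r := sq (q ^ r)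
            _ ≤ 1 * q ^ r := mul_le_mul_of_nonneg_right hqle (by positivity)
            _ = q ^ r := one_mul _
      _ = q ^ r * C := by rw [sq_abs]
  set E : ℝ := |(tg 0) ^ 2 - γ ^ 2| with hEdef
  have hBgeo : ∀ r, |(tg r) ^ 2 - γ ^ 2| ≤ q ^ r * (E + 2 * r * C) := by
    intro r
    induction r with
    | zero => simp [hEdef]
    | succ r ih =>
      push_cast
      have h1 := hB r
      have h2 : q * |(tg r) ^ 2 - γ ^ 2| ≤ q * (q ^ r * (E + 2 * r * C)) :=
        mul_le_mul_of_nonneg_left ih hqpos.le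
      have h3 := hsq r
      have hqq : q ^ r ≤ 2 * q * q ^ r := by
        nlinarith [pow_nonneg hqpos.le r]
      have : |(tg (r + 1)) ^ 2 - γ ^ 2|
          ≤ q ^ (r + 1) * (E + 2 * r * C) + q ^ r * C := by
        calc |(tg (r + 1)) ^ 2 - γ ^ 2| ≤ q * |(tg r) ^ 2 - γ ^ 2| + (a - ta r) ^ 2 := h1
          _ ≤ q * (q ^ r * (E + 2 * r * C)) + q ^ r * C := add_le_add h2 h3
          _ = q ^ (r + 1) * (E + 2 * r * C) + q ^ r * C := by ring
      calc |(tg (r + 1)) ^ 2 - γ ^ 2| ≤ q ^ (r + 1) * (E + 2 * r * C) + q ^ r * C := this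
        _ ≤ q ^ (r + 1) * (E + 2 * r * C) + 2 * q * q ^ r * C := by
            apply add_le_add_right
            exact mul_le_mul_of_nonneg_right hqq hC0
        _ = q ^ (r + 1) * (E + 2 * ((r:ℝ) + 1) * C) := by ring
  -- tendsto
  have hqpow : Tendsto (fun r : ℕ => q ^ r) atTop (nhds 0) :=
    tendsto_pow_atTop_nhds_zero_of_lt_one hqpos.le hq1
  have htaTend : Tendsto ta atTop (nhds a) := by
    rw [tendsto_iff_norm_sub_tendsto_zero]
    apply squeeze_zero (fun r => norm_nonneg _) (fun r => by
      simpa [Real.norm_eq_abs] using hAgeo r)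
    simpa using hqpow.mul_const |ta 0 - a|
  have htgsqTend : Tendsto (fun r => (tg r) ^ 2) atTop (nhds (γ ^ 2)) := by
    rw [tendsto_iff_norm_sub_tendsto_zero]
    apply squeeze_zero (fun r => norm_nonneg _)
      (fun r => by simpa [Real.norm_eq_abs] using hBgeo r)
    have h1 : Tendsto (fun r : ℕ => q ^ r * E) atTop (nhds 0) := by
      simpa using hqpow.mul_const E
    have h2 : Tendsto (fun r : ℕ => (r : ℝ) * q ^ r) atTop (nhds 0) :=
      tendsto_self_mul_const_pow_of_lt_one hqpos.le hq1
    have h3 : Tendsto (fun r : ℕ => q ^ r * (2 * r * C)) atTop (nhds 0) := by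
      have := (h2.mul_const (2 * C))
      simp only [zero_mul] at this
      convert this using 2 with r
      ring
    have := h1.add h3
    simp only [add_zero] at this
    convert this using 2 with r
    ring
  have htgTend : Tendsto tg atTop (nhds γ) := by
    have hs : Tendsto (fun r => Real.sqrt ((tg r) ^ 2)) atTop (nhds (Real.sqrt (γ ^ 2))) :=
      (Real.continuous_sqrt.tendsto _).comp htgsqTend
    rw [Real.sqrt_sq hγ.le] at hs
    convert hs using 2 with r
    rw [Real.sqrt_sq (htgpos r).le]
  exact ⟨htaTend.prodMk_nhds htgTend, hA, hq1, hB⟩
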